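/- Theorem 3.9 (combinatorial form): Let n : Fin r → ℕ with n(i) > 0 for all i, and let 𝔞_M = {a : Fin r → ℂ | Σ_i n(i)·(a(i) - conj(a(i))) = 0}. Then {a ∈ 𝔞_M : w_{s,B} a = a} = {0} if and only if s is an r-cycle and B has odd cardinality. -/

import Mathlib

/-!
Theorem 3.9 (combinatorial form).

Setting: `r ≥ 1`, `s` a permutation of `Fin r`, `B ⊆ Fin r`.  The ℝ-linear map
`w_{s,B} : (Fin r → ℂ) → (Fin r → ℂ)` is defined by `(w_{s,B} a)(s i) = -conj (a i)` if
`i ∈ B` and `(w_{s,B} a)(s i) = a i` otherwise.  For `n : Fin r → ℕ` with all `n i > 0`,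
`𝔞_M = {a | ∑ i, n i • (a i - conj (a i)) = 0}`.

STATEMENT: `{a ∈ 𝔞_M : w_{s,B} a = a} = {0}` iff `s` is an `r`-cycle (the cyclic group
generated by `s` acts transitively on `Fin r`) and `B` has odd cardinality.
-/

open Complex

/-- The signed-permutation action `w_{s,B}` on `Fin r → ℂ`:
`(w_{s,B} a)(s i) = -conj (a i)` for `i ∈ B`, and `(w_{s,B} a)(s i) = a i` for `i ∉ B`. -/
def wAct {r : ℕ} (s : Equiv.Perm (Fin r)) (B : Finset (Fin r)) (a : Fin r → ℂ) :
    Fin r → ℂ :=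
  fun j => if s.symm j ∈ B then -(starRingEnd ℂ) (a (s.symm j)) else a (s.symm j)

lemma key_of_fix {r : ℕ} {s : Equiv.Perm (Fin r)} {B : Finset (Fin r)} {a : Fin r → ℂ}
    (h : wAct s B a = a) :
    ∀ i, a (s i) = if i ∈ B then -(starRingEnd ℂ) (a i) else a i := by
  intro i
  have := congrFun h (s i)
  simpa [wAct] using this.symm

lemma fix_of_key {r : ℕ} {s : Equiv.Perm (Fin r)} {B : Finset (Fin r)} {a : Fin r → ℂ}
    (h : ∀ i, a (s i) = if i ∈ B then -(starRingEnd ℂ) (a i) else a i) :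
    wAct s B a = a := by
  funext j
  have := (h (s.symm j)).symm
  rw [Equiv.apply_symm_apply] at this
  simpa [wAct] using this

/-- Construction when `s` is not transitive: a purely imaginary invariant vector. -/

lemma reach_le {r : ℕ} (s : Equiv.Perm (Fin r))
    (hcyc : ∀ i j : Fin r, ∃ k : ℕ, (s ^ k) i = j) (x : Fin r) (d : ℕ)
    (hd : 0 < d) (hx : (s ^ d) x = x) : r ≤ d := by
  have hall : ∀ j : Fin r, ∃ k < d, (s ^ k) x = j := by
    intro j
    obtain ⟨k, hk⟩ := hcyc x j
    refine ⟨k % d, Nat.mod_lt _ hd, ?_⟩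
    have hq : ∀ q : ℕ, ((s ^ d) ^ q) x = x := by
      intro q
      induction q with
      | zero => simp
      | succ q ih => rw [pow_succ, Equiv.Perm.mul_apply, hx, ih]
    conv_rhs => rw [← hk]
    calc (s ^ (k % d)) x = (s ^ (k % d)) (((s ^ d) ^ (k / d)) x) := by rw [hq]
      _ = (s ^ (k % d) * (s ^ d) ^ (k / d)) x := by rw [Equiv.Perm.mul_apply]
      _ = (s ^ (k % d + d * (k / d))) x := by rw [← pow_mul, ← pow_add]
      _ = (s ^ k) x := by rw [Nat.mod_add_div]
  have hsub : (Finset.univ : Finset (Fin r)) ⊆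
      (Finset.range d).image (fun k => (s ^ k) x) := by
    intro j _
    obtain ⟨k, hk, he⟩ := hall j
    exact Finset.mem_image.mpr ⟨k, Finset.mem_range.mpr hk, he⟩
  have h1 := Finset.card_le_card hsub
  have h2 := Finset.card_image_le (s := Finset.range d) (f := fun k => (s ^ k) x)
  simp only [Finset.card_univ, Fintype.card_fin, Finset.card_range] at h1 h2
  omega

/-- Construction when `s` is an `r`-cycle but `B` has even cardinality: a real sign vector. -/

lemma zero_of_fixed {r : ℕ} (hr : 1 ≤ r) (s : Equiv.Perm (Fin r)) (B : Finset (Fin r))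
    (n : Fin r → ℕ) (hn : ∀ i, 0 < n i)
    (hcyc : ∀ i j : Fin r, ∃ k : ℕ, (s ^ k) i = j) (hodd : Odd B.card)
    (a : Fin r → ℂ)
    (hsum : (∑ i, (n i : ℂ) * (a i - (starRingEnd ℂ) (a i))) = 0)
    (hfix : wAct s B a = a) : a = 0 := by
  have : NeZero r := ⟨by omega⟩
  have key := key_of_fix hfix
  -- Step 1: imaginary part is constant along the (transitive) orbit
  have him : ∀ i, (a (s i)).im = (a i).im := by
    intro i
    rw [key i]
    split_ifs <;> simp
  have himk : ∀ (k : ℕ) (i : Fin r), (a ((s ^ k) i)).im = (a i).im := by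
    intro k
    induction k with
    | zero => simp
    | succ k ih =>
      intro i
      rw [pow_succ', Equiv.Perm.mul_apply, him, ih]
  have himc : ∀ j : Fin r, (a j).im = (a 0).im := by
    intro j
    obtain ⟨k, hk⟩ := hcyc 0 j
    rw [← hk, himk]
  -- Step 2: the trace condition forces the imaginary part to vanish
  have hsub : ∀ i : Fin r, a i - (starRingEnd ℂ) (a i) = (2 * (a 0).im) * I := by
    intro i
    have : (a i).im = (a 0).im := himc i
    apply Complex.ext <;> simp [Complex.sub_im, Complex.sub_re, this] <;> ring
  have hsum2 : (∑ i, (n i : ℂ)) * ((2 * (a 0).im) * I) = 0 := by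
    rw [Finset.sum_mul, ← hsum]
    exact Finset.sum_congr rfl fun i _ => by rw [hsub i]
  have hnsum : (∑ i, (n i : ℂ)) ≠ 0 := by
    have : (0:ℕ) < ∑ i, n i := by
      have h0 : (0 : Fin r) ∈ Finset.univ := Finset.mem_univ _
      exact lt_of_lt_of_le (hn 0) (Finset.single_le_sum (fun i _ => Nat.zero_le _) h0)
    simp only [← Nat.cast_sum]
    exact_mod_cast this.ne'
  have him0 : (a 0).im = 0 := by
    rcases mul_eq_zero.mp hsum2 with h | h
    · exact absurd h hnsum
    · rcases mul_eq_zero.mp h with h | h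
      · exact_mod_cast mul_eq_zero.mp h |>.resolve_left (by norm_num)
      · exact absurd h I_ne_zero
  have hreal : ∀ i, (starRingEnd ℂ) (a i) = a i := by
    intro i
    rw [Complex.conj_eq_iff_im]
    rw [himc i]; exact him0
  -- Step 3: the product of all values vanishes
  have hkey' : ∀ i, a (s i) = (if i ∈ B then (-1 : ℂ) else 1) * a i := by
    intro i
    rw [key i, hreal i]
    split_ifs <;> ring
  have hprod : (∏ i, a i) = 0 := by
    have h1 : (∏ i, a (s i)) = ∏ i, a i := Equiv.prod_comp s a
    have h2 : (∏ i, a (s i)) = (∏ i, (if i ∈ B then (-1 : ℂ) else 1)) * ∏ i, a i := by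
      rw [← Finset.prod_mul_distrib]
      exact Finset.prod_congr rfl fun i _ => hkey' i
    have h3 : (∏ i, (if i ∈ B then (-1 : ℂ) else 1)) = -1 := by
      rw [Finset.prod_ite_mem, Finset.univ_inter, Finset.prod_const, hodd.neg_one_pow]
    rw [h2, h3] at h1
    have : (2 : ℂ) * ∏ i, a i = 0 := by linear_combination (∏ i, a i) - h1
    rcases mul_eq_zero.mp this with h | h
    · norm_num at h
    · exact h
  obtain ⟨i0, _, hi0⟩ := Finset.prod_eq_zero_iff.mp hprod
  -- Step 4: one vanishing value propagates along the orbit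
  have hz : ∀ k : ℕ, a ((s ^ k) i0) = 0 := by
    intro k
    induction k with
    | zero => simpa using hi0
    | succ k ih =>
      rw [pow_succ', Equiv.Perm.mul_apply, hkey', ih, mul_zero]
  funext j
  obtain ⟨k, hk⟩ := hcyc i0 j
  rw [← hk, hz k]; rfl

lemma exists_nonzero_not_cycle {r : ℕ} (s : Equiv.Perm (Fin r)) (B : Finset (Fin r))
    (n : Fin r → ℕ) (hn : ∀ i, 0 < n i)
    (hnc : ¬ ∀ i j : Fin r, ∃ k : ℕ, (s ^ k) i = j) :
    ∃ a : Fin r → ℂ, a ≠ 0 ∧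
      (∑ i, (n i : ℂ) * (a i - (starRingEnd ℂ) (a i))) = 0 ∧ wAct s B a = a := by
  classical
  push_neg at hnc
  obtain ⟨i, j, hij⟩ := hnc
  have hns : ¬ s.SameCycle i j := by
    intro h
    obtain ⟨k, _, hk⟩ := h.exists_pow_eq'
    exact hij k hk
  set O : Finset (Fin r) := Finset.univ.filter (fun x => s.SameCycle i x) with hO
  set O' : Finset (Fin r) := Finset.univ.filter (fun x => s.SameCycle j x) with hO'
  set N : ℕ := ∑ x ∈ O, n x with hN
  set M : ℕ := ∑ x ∈ O', n x with hM
  set y : Fin r → ℝ := fun x =>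
    (if s.SameCycle i x then (M : ℝ) else 0) - (if s.SameCycle j x then (N : ℝ) else 0)
    with hy
  refine ⟨fun x => (y x : ℂ) * I, ?_, ?_, ?_⟩
  · -- nonzero at i
    intro h0
    have hyi : y i = M := by
      rw [hy]
      simp only
      rw [if_pos (Equiv.Perm.SameCycle.refl s i), if_neg (fun h => hns h.symm), sub_zero]
    have hMpos : 0 < M := by
      rw [hM]
      refine lt_of_lt_of_le (hn j) (Finset.single_le_sum (fun x _ => Nat.zero_le _) ?_)
      simp [hO', Equiv.Perm.SameCycle.refl]
    have := congrFun h0 i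
    simp only [Pi.zero_apply, mul_eq_zero] at this
    rcases this with h | h
    · rw [hyi] at h
      exact_mod_cast hMpos.ne' (by exact_mod_cast h)
    · exact I_ne_zero h
  · -- the trace condition
    have hreal : ∑ x, (n x : ℝ) * y x = 0 := by
      have h1 : ∑ x, (n x : ℝ) * (if s.SameCycle i x then (M : ℝ) else 0)
          = (N : ℝ) * M := by
        simp only [mul_ite, mul_zero]
        rw [← Finset.sum_filter, ← hO, hN]
        push_cast
        rw [Finset.sum_mul]
      have h2 : ∑ x, (n x : ℝ) * (if s.SameCycle j x then (N : ℝ) else 0)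
          = (M : ℝ) * N := by
        simp only [mul_ite, mul_zero]
        rw [← Finset.sum_filter, ← hO', hM]
        push_cast
        rw [Finset.sum_mul]
      simp only [hy, mul_sub]
      rw [Finset.sum_sub_distrib, h1, h2, mul_comm]
      ring
    have : ∀ x, ((y x : ℂ) * I - (starRingEnd ℂ) ((y x : ℂ) * I)) = (y x : ℂ) * (2 * I) := by
      intro x
      simp [Complex.conj_ofReal]
      ring
    calc ∑ x, (n x : ℂ) * ((y x : ℂ) * I - (starRingEnd ℂ) ((y x : ℂ) * I))
        = (∑ x, (n x : ℂ) * (y x : ℂ)) * (2 * I) := by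
          rw [Finset.sum_mul]
          exact Finset.sum_congr rfl fun x _ => by rw [this x, mul_assoc]
      _ = 0 := by
          have : (∑ x, (n x : ℂ) * (y x : ℂ)) = ((∑ x, (n x : ℝ) * y x : ℝ) : ℂ) := by
            push_cast
            rfl
          rw [this, hreal]
          simp
  · -- invariance
    apply fix_of_key
    intro x
    have hyx : y (s x) = y x := by
      rw [hy]
      simp only [Equiv.Perm.sameCycle_apply_right]
    have hconj : -(starRingEnd ℂ) ((y x : ℂ) * I) = (y x : ℂ) * I := by
      simp [Complex.conj_ofReal]
    rw [hyx]
    split_ifs with h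
    · exact hconj.symm
    · rfl

lemma exists_nonzero_even {r : ℕ} (hr : 1 ≤ r) (s : Equiv.Perm (Fin r)) (B : Finset (Fin r))
    (n : Fin r → ℕ)
    (hcyc : ∀ i j : Fin r, ∃ k : ℕ, (s ^ k) i = j) (hev : Even B.card) :
    ∃ a : Fin r → ℂ, a ≠ 0 ∧
      (∑ i, (n i : ℂ) * (a i - (starRingEnd ℂ) (a i))) = 0 ∧ wAct s B a = a := by
  classical
  have : NeZero r := ⟨by omega⟩
  set ψ : Fin r → Fin r := fun m => (s ^ (m : ℕ)) 0 with hψ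
  have hinj : Function.Injective ψ := by
    have haux : ∀ m m' : Fin r, m ≤ m' → ψ m = ψ m' → m = m' := by
      intro m m' hle he
      by_contra hne
      have hlt : (m : ℕ) < (m' : ℕ) := lt_of_le_of_ne hle (fun h => hne (Fin.ext h))
      have hd : 0 < (m' : ℕ) - (m : ℕ) := by omega
      have hfix : (s ^ ((m' : ℕ) - (m : ℕ))) (ψ m) = ψ m := by
        rw [hψ]
        simp only
        rw [← Equiv.Perm.mul_apply, ← pow_add]
        rw [Nat.sub_add_cancel (le_of_lt hlt)]
        exact he.symm
      have := reach_le s hcyc (ψ m) _ hd hfix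
      omega
    intro m m' he
    rcases le_total m m' with h | h
    · exact haux m m' h he
    · exact (haux m' m h he.symm).symm
  have hbij : Function.Bijective ψ := (Finite.injective_iff_bijective).mp hinj
  set e : Fin r ≃ Fin r := Equiv.ofBijective ψ hbij with heq
  have heapp : ∀ m : Fin r, e m = (s ^ (m : ℕ)) 0 := fun m => rfl
  -- s ^ r fixes 0
  have hsr : (s ^ r) 0 = 0 := by
    obtain ⟨t, ht⟩ := hbij.surjective ((s ^ r) 0)
    rcases Nat.eq_zero_or_pos (t : ℕ) with h0 | hpos
    · rw [← ht, hψ]; simp [h0]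
    · exfalso
      have hfix : (s ^ (r - (t : ℕ))) (ψ t) = ψ t := by
        rw [hψ]
        simp only
        rw [← Equiv.Perm.mul_apply, ← pow_add, Nat.sub_add_cancel (le_of_lt t.isLt)]
        exact ht.symm
      have := reach_le s hcyc (ψ t) _ (by omega : 0 < r - (t : ℕ)) hfix
      omega
  set c : ℕ → ℂ := fun k => ∏ m ∈ Finset.range k, (if (s ^ m) 0 ∈ B then (-1 : ℂ) else 1)
    with hc
  have hcreal : ∀ k, (starRingEnd ℂ) (c k) = c k := by
    intro k
    rw [hc]
    simp only [map_prod]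
    exact Finset.prod_congr rfl fun m _ => by split_ifs <;> simp
  have hcr : c r = 1 := by
    have h1 : c r = ∏ m : Fin r, (if (s ^ (m : ℕ)) 0 ∈ B then (-1 : ℂ) else 1) := by
      rw [hc]
      exact (Fin.prod_univ_eq_prod_range (fun m => if (s ^ m) 0 ∈ B then (-1 : ℂ) else 1) r).symm
    have h2 : ∏ m : Fin r, (if (s ^ (m : ℕ)) 0 ∈ B then (-1 : ℂ) else 1)
        = ∏ j : Fin r, (if j ∈ B then (-1 : ℂ) else 1) :=
      Equiv.prod_comp e (fun j => if j ∈ B then (-1 : ℂ) else 1)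
    rw [h1, h2, Finset.prod_ite_mem, Finset.univ_inter, Finset.prod_const, hev.neg_one_pow]
  set a : Fin r → ℂ := fun j => c ((e.symm j : Fin r) : ℕ) with ha
  have hareal : ∀ j, (starRingEnd ℂ) (a j) = a j := fun j => hcreal _
  have ha0 : a 0 = 1 := by
    have : e.symm 0 = 0 := by
      rw [Equiv.symm_apply_eq]
      rw [heapp]
      simp
    rw [ha]
    simp only [this]
    simp [hc]
  refine ⟨a, ?_, ?_, ?_⟩
  · intro h
    have := congrFun h 0
    rw [ha0] at this
    simp at this
  · apply Finset.sum_eq_zero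
    intro i _
    rw [hareal i, sub_self, mul_zero]
  · apply fix_of_key
    intro i
    rw [hareal i]
    set m : Fin r := e.symm i with hm
    have him : i = (s ^ (m : ℕ)) 0 := by rw [hm, ← heapp, Equiv.apply_symm_apply]
    have hai : a i = c (m : ℕ) := rfl
    have hstep : c ((m : ℕ) + 1) = (if i ∈ B then (-1 : ℂ) else 1) * c (m : ℕ) := by
      rw [hc]
      simp only
      rw [Finset.prod_range_succ, ← him, mul_comm]
    have hsi : s i = (s ^ ((m : ℕ) + 1)) 0 := by
      rw [him, ← Equiv.Perm.mul_apply, ← pow_succ']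
    rcases lt_or_eq_of_le (Nat.succ_le_of_lt m.isLt) with hlt | heqr
    · -- m + 1 < r
      have : e.symm (s i) = ⟨(m : ℕ) + 1, hlt⟩ := by
        rw [Equiv.symm_apply_eq, heapp, ← hsi]
      have hasi : a (s i) = c ((m : ℕ) + 1) := by
        rw [ha]
        simp only [this]
      rw [hasi, hstep, hai]
      split_ifs <;> ring
    · -- m + 1 = r : wrap around
      have heqr' : (m : ℕ) + 1 = r := heqr
      have hsi0 : s i = 0 := by rw [hsi, heqr', hsr]
      have : e.symm (s i) = 0 := by
        rw [Equiv.symm_apply_eq, heapp, hsi0]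
        simp
      have hasi : a (s i) = c 0 := by rw [ha]; simp only [this]; simp
      have hc0 : c 0 = 1 := by simp [hc]
      have : (1 : ℂ) = (if i ∈ B then (-1 : ℂ) else 1) * c (m : ℕ) := by
        rw [← hstep, heqr', hcr]
      rw [hasi, hc0, this, hai]
      split_ifs <;> ring

theorem fixed_space_trivial_iff_cycle_and_odd
    {r : ℕ} (hr : 1 ≤ r) (s : Equiv.Perm (Fin r)) (B : Finset (Fin r))
    (n : Fin r → ℕ) (hn : ∀ i, 0 < n i) :
    {a : Fin r → ℂ |
        (∑ i, (n i : ℂ) * (a i - (starRingEnd ℂ) (a i))) = 0 ∧ wAct s B a = a} = {0} ↔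
      ((∀ i j : Fin r, ∃ k : ℕ, (s ^ k) i = j) ∧ Odd B.card) := by
  constructor
  · intro h
    by_contra hcon
    rw [not_and_or] at hcon
    obtain ⟨a, hne, hsum, hfix⟩ :
        ∃ a : Fin r → ℂ, a ≠ 0 ∧
          (∑ i, (n i : ℂ) * (a i - (starRingEnd ℂ) (a i))) = 0 ∧ wAct s B a = a := by
      rcases hcon with h1 | h1
      · exact exists_nonzero_not_cycle s B n hn h1
      · by_cases hc2 : ∀ i j : Fin r, ∃ k : ℕ, (s ^ k) i = j
        · exact exists_nonzero_even hr s B n hc2 (Nat.not_odd_iff_even.mp h1)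
        · exact exists_nonzero_not_cycle s B n hn hc2
    have hmem : a ∈ {a : Fin r → ℂ |
        (∑ i, (n i : ℂ) * (a i - (starRingEnd ℂ) (a i))) = 0 ∧ wAct s B a = a} :=
      ⟨hsum, hfix⟩
    rw [h] at hmem
    exact hne hmem
  · rintro ⟨hcyc, hodd⟩
    apply Set.eq_singleton_iff_unique_mem.mpr
    constructor
    · refine ⟨by simp, ?_⟩
      funext j
      simp [wAct]
    · rintro a ⟨h1, h2⟩
      exact zero_of_fixed hr s B n hn hcyc hodd a h1 h2
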